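/- For k-algebra homomorphisms f, g : B → C we have f ∼ g if and only if the k-algebra map {f,g} : B ⊗ B → C given by a ⊗ b ↦ f(a)·g(b) annihilates J², where J is the kernel of the multiplication map B ⊗ B → B. -/

import Mathlib

open TensorProduct

theorem stmt_9 (k B C : Type*) [CommRing k] [CommRing B] [CommRing C]
    [Algebra k B] [Algebra k C] (f g : B →ₐ[k] C) :
    (∀ a b : B, (f a - g a) * (f b - g b) = 0) ↔
    (∀ x ∈ (RingHom.ker (Algebra.TensorProduct.lmul' k (S := B)).toRingHom) ^ 2,
      Algebra.TensorProduct.productMap f g x = 0) := by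
  have hker : (RingHom.ker (Algebra.TensorProduct.lmul' k (S := B)).toRingHom) =
      KaehlerDifferential.ideal k B := rfl
  constructor
  · intro h x hx
    have hle : (RingHom.ker (Algebra.TensorProduct.lmul' k (S := B)).toRingHom) ^ 2 ≤
        RingHom.ker (Algebra.TensorProduct.productMap f g).toRingHom := by
      rw [hker, ← KaehlerDifferential.span_range_eq_ideal k B, pow_two,
        Ideal.span_mul_span, Ideal.span_le]
      intro z hz
      simp only [Set.mem_iUnion, Set.mem_mul, Set.mem_range, Set.mem_singleton_iff,
        exists_prop, exists_exists_eq_and] at hz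
      obtain ⟨a, b, rfl⟩ := hz
      have : Algebra.TensorProduct.productMap f g
          (((1 : B) ⊗ₜ[k] a - a ⊗ₜ[k] 1) * ((1 : B) ⊗ₜ[k] b - b ⊗ₜ[k] 1)) =
          (g a - f a) * (g b - f b) := by
        simp [sub_mul, mul_sub]; ring
      have h2 : (g a - f a) * (g b - f b) = (f a - g a) * (f b - g b) := by ring
      simp only [SetLike.mem_coe, RingHom.mem_ker, AlgHom.toRingHom_eq_coe, RingHom.coe_coe]
      rw [this, h2, h a b]
    exact hle hx
  · intro h a b
    have hmem : ∀ c : B, (c ⊗ₜ[k] (1 : B) - (1 : B) ⊗ₜ[k] c) ∈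
        RingHom.ker (Algebra.TensorProduct.lmul' k (S := B)).toRingHom := by
      intro c
      simp [RingHom.mem_ker]
    have := h ((a ⊗ₜ[k] 1 - 1 ⊗ₜ[k] a) * (b ⊗ₜ[k] 1 - 1 ⊗ₜ[k] b))
      (by rw [pow_two]; exact Ideal.mul_mem_mul (hmem a) (hmem b))
    have heq : Algebra.TensorProduct.productMap f g
        ((a ⊗ₜ[k] (1 : B) - (1 : B) ⊗ₜ[k] a) * (b ⊗ₜ[k] (1 : B) - (1 : B) ⊗ₜ[k] b)) =
        (f a - g a) * (f b - g b) := by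
      simp [sub_mul, mul_sub]; ring
    rw [heq] at this
    exact this
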